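/- Let L be a frame. For an ideal I of L (a nonempty, downward-closed, join-closed subset), define ∇_I = {(x,y) ∈ L × L : ∃ a ∈ I, x ⊔ a = y ⊔ a}. Then: (i) ∇_I is a lattice congruence on L; (ii) for ideals I, J of L, I ⊆ J if and only if ∇_I ⊆ ∇_J (so I ↦ ∇_I is an order embedding); and (iii) for every subset A ⊆ L, the lattice congruence generated by ⋃_{a ∈ A} ∇_a equals ∇_I, where I is the smallest ideal of L containing A ∪ {⊥}. (Hence the joins of closed congruences in the frame of lattice congruences form a frame isomorphic to the frame of ideals of L.) -/

import Mathlib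

universe u

/-- A lattice congruence on a frame `L`: an equivalence relation closed under
binary meets and binary joins (pointwise). -/
def IsLatticeCongruence {L : Type u} [Order.Frame L] (C : Set (L × L)) : Prop :=
  Equivalence (fun a b : L => (a, b) ∈ C) ∧
    ∀ p q : L × L, p ∈ C → q ∈ C →
      (p.1 ⊓ q.1, p.2 ⊓ q.2) ∈ C ∧ (p.1 ⊔ q.1, p.2 ⊔ q.2) ∈ C

/-- The smallest lattice congruence containing a relation `R`. -/
def latticeCongGen {L : Type u} [Order.Frame L] (R : Set (L × L)) : Set (L × L) :=
  ⋂₀ {C | IsLatticeCongruence C ∧ R ⊆ C}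

/-- The closed congruence `∇_a`. -/
def nabla {L : Type u} [Order.Frame L] (a : L) : Set (L × L) :=
  {p | p.1 ⊔ a = p.2 ⊔ a}

/-- An ideal of `L`: a nonempty lower set closed under binary joins. -/
def IsIdeal {L : Type u} [Order.Frame L] (I : Set L) : Prop :=
  I.Nonempty ∧ IsLowerSet I ∧ ∀ a ∈ I, ∀ b ∈ I, a ⊔ b ∈ I

/-- The congruence `∇_I` associated to an ideal `I`. -/
def nablaIdeal {L : Type u} [Order.Frame L] (I : Set L) : Set (L × L) :=
  {p | ∃ a ∈ I, p.1 ⊔ a = p.2 ⊔ a}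

/-- For ideals `I` of a frame `L`: `∇_I` is a lattice congruence, `I ↦ ∇_I` is
an order embedding, and the lattice congruence generated by a union of closed
congruences `∇_a`, `a ∈ A`, is `∇_I` for the smallest ideal `I ⊇ A ∪ {⊥}`. -/
theorem nablaIdeal_properties {L : Type u} [Order.Frame L] :
    (∀ I : Set L, IsIdeal I → IsLatticeCongruence (nablaIdeal I)) ∧
    (∀ I J : Set L, IsIdeal I → IsIdeal J → (I ⊆ J ↔ nablaIdeal I ⊆ nablaIdeal J)) ∧
    (∀ A : Set L, latticeCongGen (⋃ a ∈ A, nabla a) =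
      nablaIdeal (⋂₀ {J | IsIdeal J ∧ A ∪ {⊥} ⊆ J})) := by
  have hcong : ∀ I : Set L, IsIdeal I → IsLatticeCongruence (nablaIdeal I) := by
    rintro I ⟨⟨i, hi⟩, hlow, hjoin⟩
    constructor
    · constructor
      · intro x; exact ⟨i, hi, rfl⟩
      · rintro x y ⟨a, ha, h⟩; exact ⟨a, ha, h.symm⟩
      · rintro x y z ⟨a, ha, h1⟩ ⟨b, hb, h2⟩
        refine ⟨a ⊔ b, hjoin a ha b hb, ?_⟩
        calc x ⊔ (a ⊔ b) = (x ⊔ a) ⊔ b := by rw [sup_assoc]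
          _ = (y ⊔ a) ⊔ b := by rw [h1]
          _ = (y ⊔ b) ⊔ a := by rw [sup_assoc, sup_assoc, sup_comm a b]
          _ = (z ⊔ b) ⊔ a := by rw [h2]
          _ = z ⊔ (a ⊔ b) := by rw [sup_assoc, sup_comm b a]
    · rintro ⟨x, y⟩ ⟨c, d⟩ ⟨a, ha, h1⟩ ⟨b, hb, h2⟩
      have hab : a ⊔ b ∈ I := hjoin a ha b hb
      have hx : x ⊔ (a ⊔ b) = y ⊔ (a ⊔ b) := by
        rw [← sup_assoc, h1, sup_assoc]
      have hc : c ⊔ (a ⊔ b) = d ⊔ (a ⊔ b) := by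
        rw [sup_comm a b, ← sup_assoc, h2, sup_assoc]
      constructor
      · exact ⟨a ⊔ b, hab, by
          simp only [sup_inf_right]
          rw [hx, hc]⟩
      · refine ⟨a ⊔ b, hab, ?_⟩
        dsimp only
        have e : ∀ u v : L, (u ⊔ (a ⊔ b)) ⊔ (v ⊔ (a ⊔ b)) = (u ⊔ v) ⊔ (a ⊔ b) :=
          fun u v => by rw [sup_sup_sup_comm, sup_idem]
        rw [← e x c, hx, hc, e]
  refine ⟨hcong, ?_, ?_⟩
  · intro I J hI hJ
    constructor
    · rintro hIJ ⟨x, y⟩ ⟨a, ha, h⟩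
      exact ⟨a, hIJ ha, h⟩
    · intro h a ha
      have : (a, ⊥) ∈ nablaIdeal I := ⟨a, ha, by simp⟩
      obtain ⟨b, hb, hab⟩ := h this
      simp only at hab
      rw [bot_sup_eq] at hab
      exact hJ.2.1 (le_sup_left.trans_eq hab) hb
  · intro A
    set I := ⋂₀ {J | IsIdeal J ∧ A ∪ {⊥} ⊆ J} with hIdef
    have hIideal : IsIdeal I := by
      refine ⟨⟨⊥, ?_⟩, ?_, ?_⟩
      · intro J hJ; exact hJ.2 (Or.inr rfl)
      · intro a b hba ha J hJ
        exact hJ.1.2.1 hba (ha J hJ)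
      · intro a ha b hb J hJ
        exact hJ.1.2.2 a (ha J hJ) b (hb J hJ)
    have hAI : A ∪ {⊥} ⊆ I := by
      intro a ha J hJ; exact hJ.2 ha
    apply subset_antisymm
    · apply Set.sInter_subset_of_mem
      refine ⟨hcong I hIideal, ?_⟩
      rintro ⟨x, y⟩ hxy
      simp only [Set.mem_iUnion] at hxy
      obtain ⟨a, haA, h⟩ := hxy
      exact ⟨a, hAI (Or.inl haA), h⟩
    · rintro ⟨x, y⟩ ⟨a, ha, hxy⟩ C hC
      obtain ⟨⟨hCcong, hCjm⟩, hCR⟩ := hC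
      -- J = elements congruent to ⊥
      set J : Set L := {b | (b, ⊥) ∈ C} with hJdef
      have hJideal : IsIdeal J := by
        refine ⟨⟨⊥, hCcong.refl ⊥⟩, ?_, ?_⟩
        · intro u v hvu hu
          have := (hCjm (v, v) (u, ⊥) (hCcong.refl v) hu).1
          show (v, ⊥) ∈ C
          simpa [inf_eq_left.mpr hvu] using this
        · intro u hu v hv
          have := (hCjm (u, ⊥) (v, ⊥) hu hv).2
          show (u ⊔ v, ⊥) ∈ C
          simpa using this
      have hAJ : A ∪ {⊥} ⊆ J := by
        rintro b (hb | hb)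
        · apply hCR
          simp only [Set.mem_iUnion]
          exact ⟨b, hb, by simp [nabla]⟩
        · rw [hb]; exact hCcong.refl ⊥
      have haJ : (a, ⊥) ∈ C := ha J ⟨hJideal, hAJ⟩
      have hx : (x ⊔ a, x) ∈ C := by
        have := (hCjm (x, x) (a, ⊥) (hCcong.refl x) haJ).2
        simpa using this
      have hy : (y ⊔ a, y) ∈ C := by
        have := (hCjm (y, y) (a, ⊥) (hCcong.refl y) haJ).2
        simpa using this
      exact hCcong.trans (hCcong.symm hx) (hxy ▸ hy)
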